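/- Let q ≥ 2 and d ≥ 3 be integers, and set z₁ := 2/d − 1 if q = 2 and d is odd, and z₁ := −1/(q−1) otherwise. Then the equation ζ_{q,d}(ẑ) = z has a unique solution ẑ₁ = ẑ₁(z) in [−1/(q−1), 1] for each z ∈ [z₁, 1], and has no solution in [−1/(q−1), 1] for z < z₁. The map z ↦ ẑ₁(z) is continuous on [z₁, 1], continuously differentiable on (z₁, 1), and its derivative is strictly positive on (z₁, 1). Moreover ẑ₁(z) ∈ I′_{q,d}(z), where I′_{q,d}(z) := {−1/(q−1)} if z = z₁; (−1/(q−1), z) if z ∈ (z₁, 0) and d is odd; (z, 0) if z ∈ (z₁, 0) and d is even; {0} if z = 0; (0, z) if z ∈ (0, 1); and {1} if z = 1. -/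

import Mathlib

open Real Set Filter Polynomial
open scoped Classical

/-- The function `ζ_{q,d}`, extended by continuity at `ẑ = -1` when `q = 2` and `d` is odd. -/
noncomputable def zetaF (q d : ℕ) (z : ℝ) : ℝ :=
  if q = 2 ∧ Odd d ∧ z = -1 then 2 / (d : ℝ) - 1
  else (z + z ^ (d - 1) + ((q : ℝ) - 2) * z ^ d) / (1 + ((q : ℝ) - 1) * z ^ d)

/-- The left endpoint `z₁` of the range of `ζ_{q,d}` on `[−1/(q−1), 1]`. -/
noncomputable def zOne (q d : ℕ) : ℝ :=
  if q = 2 ∧ Odd d then 2 / (d : ℝ) - 1 else -(1 / ((q : ℝ) - 1))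

/-- The localization set `I′_{q,d}(z)` for the solution `ẑ₁(z)`. -/
noncomputable def Iprime (q d : ℕ) (z : ℝ) : Set ℝ :=
  if z = zOne q d then {-(1 / ((q : ℝ) - 1))}
  else if z = 0 then {0}
  else if z = 1 then {1}
  else if z < 0 then
    (if Odd d then Set.Ioo (-(1 / ((q : ℝ) - 1))) z else Set.Ioo z 0)
  else Set.Ioo 0 z

noncomputable def numF (q d : ℕ) (w : ℝ) : ℝ := w + w ^ (d - 1) + ((q : ℝ) - 2) * w ^ d
noncomputable def denF (q d : ℕ) (w : ℝ) : ℝ := 1 + ((q : ℝ) - 1) * w ^ d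
noncomputable def NF (q d : ℕ) (w : ℝ) : ℝ :=
  1 + ((d : ℝ) - 1) * w ^ (d - 2) + ((q : ℝ) - 2) * (d : ℝ) * (w ^ (d - 2) * w)
    - ((q : ℝ) - 1) * ((d : ℝ) - 1) * (w ^ (d - 2) * w ^ 2)
    - ((q : ℝ) - 1) * ((w ^ (d - 2)) ^ 2 * w ^ 2)

lemma pow_dm1 (d : ℕ) (hd : 3 ≤ d) (w : ℝ) : w ^ (d - 1) = w ^ (d - 2) * w := by
  rw [← pow_succ]; congr 1; omega

lemma pow_d (d : ℕ) (hd : 3 ≤ d) (w : ℝ) : w ^ d = w ^ (d - 2) * w ^ 2 := by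
  rw [← pow_add]; congr 1; omega

lemma zetaF_eq (q d : ℕ) {w : ℝ} (h : ¬(q = 2 ∧ Odd d ∧ w = -1)) :
    zetaF q d w = numF q d w / denF q d w := by
  rw [zetaF, if_neg h]; rfl

lemma hQ1 {q : ℕ} (hq : 2 ≤ q) : (1 : ℝ) < (q : ℝ) := by
  exact_mod_cast Nat.lt_of_lt_of_le one_lt_two hq

lemma hQ2 {q : ℕ} (hq : 2 ≤ q) : (2 : ℝ) ≤ (q : ℝ) := by exact_mod_cast hq

lemma aF_neg {q : ℕ} (hq : 2 ≤ q) : -(1 / ((q : ℝ) - 1)) < 0 := by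
  have h := hQ1 hq
  have h0 : (0:ℝ) < (q:ℝ) - 1 := by linarith
  have : (0:ℝ) < 1 / ((q : ℝ) - 1) := by positivity
  linarith

lemma aF_ge {q : ℕ} (hq : 2 ≤ q) : (-1 : ℝ) ≤ -(1 / ((q : ℝ) - 1)) := by
  have h := hQ2 hq
  have h1 : (0:ℝ) < (q:ℝ) - 1 := by linarith
  rw [neg_le_neg_iff, div_le_one h1]
  linarith

lemma den_pos (q d : ℕ) (hq : 2 ≤ q) (hd : 3 ≤ d) {w : ℝ}
    (h1 : -(1 / ((q : ℝ) - 1)) ≤ w) (h2 : w ≤ 1) (h3 : ¬(q = 2 ∧ Odd d ∧ w = -1)) :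
    0 < denF q d w := by
  have hQ := hQ1 hq
  have hQ0 : (0:ℝ) < (q:ℝ) - 1 := by linarith
  rcases le_or_gt 0 w with hw | hw
  · have : 0 ≤ ((q:ℝ) - 1) * w ^ d := by positivity
    rw [denF]; linarith
  · rcases eq_or_lt_of_le hq with hq2 | hq3
    · -- q = 2
      have hq2' : q = 2 := hq2.symm
      subst hq2'
      have hw1 : (-1 : ℝ) ≤ w := le_trans (by norm_num) h1
      rw [denF]
      norm_num
      rcases Nat.even_or_odd d with hev | hod
      · have : 0 ≤ w ^ d := hev.pow_nonneg w
        linarith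
      · have hwne : w ≠ -1 := fun hc => h3 ⟨rfl, hod, hc⟩
        have hw1' : (-1 : ℝ) < w := lt_of_le_of_ne hw1 (Ne.symm hwne)
        have : (-1 : ℝ) ^ d < w ^ d := by
          exact hod.strictMono_pow hw1'
        rw [hod.neg_one_pow] at this
        linarith
    · -- q ≥ 3
      have hQ3 : (3:ℝ) ≤ (q:ℝ) := by exact_mod_cast hq3
      have hw' : |w| ≤ 1 / ((q:ℝ) - 1) := by
        rw [abs_le]; constructor
        · exact h1
        · nlinarith [one_div_pos.mpr hQ0]
      have hd1 : |((q:ℝ) - 1) * w ^ d| ≤ ((q:ℝ)-1) * (1/((q:ℝ)-1)) ^ d := by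
        rw [abs_mul, abs_pow, abs_of_pos hQ0]
        exact mul_le_mul_of_nonneg_left (pow_le_pow_left₀ (abs_nonneg w) hw' d) hQ0.le
      have key : ((q:ℝ)-1) * (1/((q:ℝ)-1)) ^ d < 1 := by
        have h2' : (2:ℝ) ≤ (q:ℝ) - 1 := by linarith
        have : (1/((q:ℝ)-1)) ^ d ≤ (1/((q:ℝ)-1)) ^ 2 := by
          apply pow_le_pow_of_le_one (by positivity) _ (by omega)
          rw [div_le_one hQ0]; linarith
        have hlt : ((q:ℝ)-1) * (1/((q:ℝ)-1)) ^ 2 < 1 := by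
          rw [div_pow, one_pow, mul_one_div, div_lt_one (by positivity)]
          nlinarith
        calc ((q:ℝ)-1) * (1/((q:ℝ)-1)) ^ d ≤ ((q:ℝ)-1) * (1/((q:ℝ)-1)) ^ 2 :=
              mul_le_mul_of_nonneg_left this hQ0.le
          _ < 1 := hlt
      have := neg_abs_le (((q:ℝ) - 1) * w ^ d)
      rw [denF]
      nlinarith [abs_nonneg (((q:ℝ) - 1) * w ^ d)]

lemma zOne_neg {q d : ℕ} (hq : 2 ≤ q) (hd : 3 ≤ d) : zOne q d < 0 := by
  rw [zOne]
  split_ifs with h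
  · have hd3 : (3:ℝ) ≤ (d:ℝ) := by exact_mod_cast hd
    have : 2 / (d:ℝ) ≤ 2 / 3 := by
      apply div_le_div_of_nonneg_left (by norm_num) (by norm_num) hd3
    linarith
  · exact aF_neg hq

lemma zetaF_one (q d : ℕ) (hq : 2 ≤ q) (hd : 3 ≤ d) : zetaF q d 1 = 1 := by
  rw [zetaF_eq q d (by norm_num)]
  have hQ := hQ2 hq
  rw [numF, denF]
  simp only [one_pow]
  rw [div_eq_one_iff_eq (by linarith)]
  ring

lemma zetaF_zero (q d : ℕ) (hq : 2 ≤ q) (hd : 3 ≤ d) : zetaF q d 0 = 0 := by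
  rw [zetaF_eq q d (by norm_num)]
  rw [numF, denF]
  rw [zero_pow (by omega), zero_pow (by omega)]
  norm_num

-- the fixed point identity
lemma num_sub_mul_den (q d : ℕ) (hd : 3 ≤ d) (w : ℝ) :
    numF q d w - w * denF q d w = w ^ (d - 2) * w * ((1 - w) * (1 + ((q:ℝ) - 1) * w)) := by
  rw [numF, denF, pow_dm1 d hd, pow_d d hd]
  ring

lemma zetaF_aF (q d : ℕ) (hq : 2 ≤ q) (hd : 3 ≤ d) :
    zetaF q d (-(1 / ((q : ℝ) - 1))) = zOne q d := by
  have hQ := hQ2 hq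
  have hQ0 : (0:ℝ) < (q:ℝ) - 1 := by linarith
  by_cases hex : q = 2 ∧ Odd d
  · have ha : -(1 / ((q : ℝ) - 1)) = -1 := by rw [hex.1]; norm_num
    rw [ha, zetaF, if_pos ⟨hex.1, hex.2, rfl⟩, zOne, if_pos hex]
  · have hcond : ¬(q = 2 ∧ Odd d ∧ (-(1 / ((q : ℝ) - 1)) : ℝ) = -1) := by
      intro ⟨h1, h2, _⟩; exact hex ⟨h1, h2⟩
    rw [zetaF_eq q d hcond, zOne, if_neg hex]
    have hden : 0 < denF q d (-(1 / ((q : ℝ) - 1))) := by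
      apply den_pos q d hq hd le_rfl _ hcond
      have : (0:ℝ) < 1 / ((q:ℝ) - 1) := by positivity
      linarith
    rw [div_eq_iff (ne_of_gt hden)]
    have key := num_sub_mul_den q d hd (-(1 / ((q : ℝ) - 1)))
    have hz : 1 + ((q:ℝ) - 1) * (-(1 / ((q : ℝ) - 1))) = 0 := by
      field_simp
      norm_num
    rw [hz] at key
    linarith [key]

noncomputable def SF (m : ℕ) (w : ℝ) : ℝ := ∑ k ∈ Finset.range m, (-w) ^ k

lemma SF_cont (m : ℕ) : Continuous (SF m) := by
  apply continuous_finset_sum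
  intro i _
  exact (continuous_neg.pow i)

lemma SF_mul (m : ℕ) (hm : Odd m) (w : ℝ) : (1 + w) * SF m w = 1 + w ^ m := by
  have := geom_sum_mul (-w) m
  rw [SF]
  have h2 : (-w) ^ m = -(w ^ m) := hm.neg_pow w
  nlinarith [this]

lemma SF_neg_one (m : ℕ) : SF m (-1) = (m : ℝ) := by
  rw [SF]
  simp

lemma SF_pos (m : ℕ) (hm : Odd m) (hm0 : 0 < m) {w : ℝ} (h1 : -1 ≤ w) (h2 : w ≤ 1) :
    0 < SF m w := by
  rcases eq_or_lt_of_le h1 with rfl | h1'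
  · rw [SF_neg_one]; exact_mod_cast hm0
  · have hw : (0:ℝ) < 1 + w := by linarith
    have hwm : -1 < w ^ m := by
      have h3 : (-1:ℝ) ^ m < w ^ m := hm.strictMono_pow (R := ℝ) h1'
      rwa [hm.neg_one_pow] at h3
    have := SF_mul m hm w
    nlinarith

lemma zetaF_contOn (q d : ℕ) (hq : 2 ≤ q) (hd : 3 ≤ d) :
    ContinuousOn (zetaF q d) (Icc (-(1 / ((q : ℝ) - 1))) 1) := by
  have hQ := hQ2 hq
  have hQ0 : (0:ℝ) < (q:ℝ) - 1 := by linarith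
  by_cases hex : q = 2 ∧ Odd d
  · -- exceptional representation
    obtain ⟨hq2, hodd⟩ := hex
    subst hq2
    have ha : -(1 / (((2:ℕ) : ℝ) - 1)) = -1 := by norm_num
    rw [ha]
    have hd2 : Odd (d - 2) := by
      obtain ⟨k, hk⟩ := hodd; exact ⟨k - 1, by omega⟩
    have hS2 : ∀ w ∈ Icc (-1 : ℝ) 1, SF d w ≠ 0 := fun w hw =>
      ne_of_gt (SF_pos d hodd (by omega) hw.1 hw.2)
    have hcont : ContinuousOn (fun w => (w * SF (d - 2) w) / SF d w) (Icc (-1 : ℝ) 1) := by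
      apply ContinuousOn.div
      · exact (continuous_id.mul (SF_cont _)).continuousOn
      · exact (SF_cont _).continuousOn
      · exact hS2
    apply hcont.congr
    intro w hw
    rcases eq_or_lt_of_le hw.1 with rfl | hw1
    · show zetaF 2 d (-1) = (-1) * SF (d-2) (-1) / SF d (-1)
      rw [zetaF, if_pos ⟨rfl, hodd, rfl⟩, SF_neg_one, SF_neg_one]
      have hd0 : (0:ℝ) < (d:ℝ) := by exact_mod_cast (by omega : 0 < d)
      have hcast : ((d - 2 : ℕ) : ℝ) = (d:ℝ) - 2 := by
        rw [Nat.cast_sub (by omega)]; norm_num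
      rw [hcast]
      field_simp
      ring
    · have hwne : w ≠ -1 := ne_of_gt hw1
      rw [zetaF_eq 2 d (fun h => hwne h.2.2), numF, denF]
      have c2 : ((2:ℕ):ℝ) - 2 = 0 := by norm_num
      have c1 : ((2:ℕ):ℝ) - 1 = 1 := by norm_num
      rw [c2, c1]
      have hnum : w + w ^ (d - 1) + 0 * w ^ d = w * ((1 + w) * SF (d-2) w) := by
        rw [SF_mul (d-2) hd2 w, pow_dm1 d hd, pow_d d hd]
        ring
      have hden : 1 + 1 * w ^ d = (1 + w) * SF d w := by
        rw [SF_mul d hodd w]; ring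
      rw [hnum, hden]
      have h1w : (1 + w) ≠ 0 := by intro h; apply hwne; linarith
      rw [show w * ((1 + w) * SF (d-2) w) = (1 + w) * (w * SF (d-2) w) from by ring,
        mul_div_mul_left _ _ h1w]
  · -- generic: zetaF = numF/denF with positive denominator
    have hcont : ContinuousOn (fun w => numF q d w / denF q d w)
        (Icc (-(1 / ((q : ℝ) - 1))) 1) := by
      apply ContinuousOn.div
      · apply Continuous.continuousOn
        show Continuous fun w : ℝ => w + w ^ (d-1) + ((q:ℝ)-2) * w ^ d
        fun_prop
      · apply Continuous.continuousOn
        show Continuous fun w : ℝ => 1 + ((q:ℝ)-1) * w ^ d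
        fun_prop
      · intro w hw
        exact ne_of_gt (den_pos q d hq hd hw.1 hw.2 (fun h => hex ⟨h.1, h.2.1⟩))
    apply hcont.congr
    intro w hw
    exact zetaF_eq q d (fun h => hex ⟨h.1, h.2.1⟩)

lemma zetaF_hasDeriv (q d : ℕ) (hq : 2 ≤ q) (hd : 3 ≤ d) {x : ℝ}
    (hx : x ∈ Ioo (-(1 / ((q : ℝ) - 1))) 1) :
    HasDerivAt (zetaF q d) (NF q d x / (denF q d x) ^ 2) x := by
  have hxne : x ≠ -1 := by
    have := aF_ge hq
    intro h; rw [h] at hx; linarith [hx.1]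
  have hden : denF q d x ≠ 0 :=
    ne_of_gt (den_pos q d hq hd hx.1.le hx.2.le (fun h => hxne h.2.2))
  have hcd1 : ((d - 1 : ℕ) : ℝ) = (d : ℝ) - 1 := by
    rw [Nat.cast_sub (by omega)]; norm_num
  -- derivative of numerator
  have hnum : HasDerivAt (numF q d)
      (1 + ((d:ℝ) - 1) * x ^ (d - 2) + ((q:ℝ) - 2) * ((d:ℝ) * x ^ (d - 1))) x := by
    have h3 : HasDerivAt (fun w : ℝ => w + w ^ (d - 1) + ((q:ℝ) - 2) * w ^ d)
        (1 + ((d - 1 : ℕ) : ℝ) * x ^ (d - 1 - 1) + ((q:ℝ) - 2) * ((d : ℕ) * x ^ (d - 1))) x :=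
      ((hasDerivAt_id x).add (hasDerivAt_pow (d - 1) x)).add
        ((hasDerivAt_pow d x).const_mul ((q:ℝ) - 2))
    have hval : 1 + ((d - 1 : ℕ) : ℝ) * x ^ (d - 1 - 1) + ((q:ℝ) - 2) * (((d : ℕ) : ℝ) * x ^ (d - 1))
        = 1 + ((d:ℝ) - 1) * x ^ (d - 2) + ((q:ℝ) - 2) * ((d:ℝ) * x ^ (d - 1)) := by
      rw [hcd1, show d - 1 - 1 = d - 2 from by omega]
    rw [← hval]
    exact h3
  have hdend : HasDerivAt (denF q d) (((q:ℝ) - 1) * ((d:ℝ) * x ^ (d - 1))) x := by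
    have h3 : HasDerivAt (fun w : ℝ => 1 + ((q:ℝ) - 1) * w ^ d)
        (((q:ℝ) - 1) * (((d : ℕ) : ℝ) * x ^ (d - 1))) x :=
      ((hasDerivAt_pow d x).const_mul ((q:ℝ) - 1)).const_add 1
    exact h3
  have hdiv := hnum.div hdend hden
  have hev : zetaF q d =ᶠ[nhds x] fun w => numF q d w / denF q d w := by
    filter_upwards [IsOpen.mem_nhds isOpen_compl_singleton (by exact hxne : x ∈ ({-1}ᶜ : Set ℝ))]
      with w hw
    exact zetaF_eq q d (fun h => hw h.2.2)
  have := hdiv.congr_of_eventuallyEq hev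
  refine this.congr_deriv ?_
  rw [div_eq_div_iff (by positivity) (by positivity)]
  congr 1
  rw [NF, numF, denF, pow_dm1 d hd, pow_d d hd]
  ring

lemma pair_sum (m : ℕ) (hm : 1 ≤ m) {s : ℝ} (h0 : 0 < s) (h1 : s < 1) :
    ((m:ℝ) + 1) * s ^ m < ∑ k ∈ Finset.range (m+1), s ^ (2*k) := by
  have hrefl : ∑ k ∈ Finset.range (m+1), s ^ (2*(m - k)) = ∑ k ∈ Finset.range (m+1), s ^ (2*k) := by
    have h := Finset.sum_range_reflect (fun k => s ^ (2*k)) (m+1)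
    simpa using h
  have key : ∀ k ∈ Finset.range (m+1), 2 * s ^ m ≤ s ^ (2*k) + s ^ (2*(m - k)) := by
    intro k hk
    have hkm : k ≤ m := by simpa [Nat.lt_succ_iff] using hk
    have e1 : s ^ k * s ^ (m - k) = s ^ m := by rw [← pow_add]; congr 1; omega
    have e2 : (s ^ k) ^ 2 = s ^ (2*k) := by rw [← pow_mul]; congr 1; omega
    have e3 : (s ^ (m - k)) ^ 2 = s ^ (2*(m - k)) := by rw [← pow_mul]; congr 1; omega
    nlinarith [sq_nonneg (s ^ k - s ^ (m - k))]
  have strict0 : 2 * s ^ m < s ^ (2*0) + s ^ (2*(m - 0)) := by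
    have hsm : s ^ m < 1 := pow_lt_one₀ h0.le h1 (by omega)
    have e2 : (s ^ m) ^ 2 = s ^ (2*(m-0)) := by rw [← pow_mul]; congr 1; omega
    have e0 : s ^ (2*0) = 1 := by norm_num
    have hpos : 0 < (1 - s ^ m) * (1 - s ^ m) := mul_pos (by linarith) (by linarith)
    rw [e0, ← e2]
    nlinarith
  have hsum : ∑ _k ∈ Finset.range (m+1), (2 * s ^ m)
      < ∑ k ∈ Finset.range (m+1), (s ^ (2*k) + s ^ (2*(m - k))) := by
    apply Finset.sum_lt_sum key
    exact ⟨0, Finset.mem_range.mpr (by omega), strict0⟩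
  rw [Finset.sum_const, Finset.card_range] at hsum
  rw [Finset.sum_add_distrib, hrefl] at hsum
  have : ((m:ℝ) + 1) * (2 * s ^ m) ≤ (m + 1) • (2 * s ^ m) := by
    rw [nsmul_eq_mul]; push_cast; ring_nf; exact le_rfl
  linarith [this]

lemma geom_id (m : ℕ) (s : ℝ) :
    (∑ k ∈ Finset.range (m+1), s ^ (2*k)) * (1 - s^2) = 1 - (s^m)^2 * s^2 := by
  have h := geom_sum_mul (s^2) (m+1)
  simp_rw [← pow_mul] at h
  have h1 : (s^2) ^ (m+1) = (s^m)^2 * s^2 := by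
    rw [← pow_mul, ← pow_mul, ← pow_add]; congr 1; omega
  rw [← pow_mul] at h1
  linear_combination (-1 : ℝ) * h - h1

set_option maxHeartbeats 1000000 in
lemma NF_pos (q d : ℕ) (hq : 2 ≤ q) (hd : 3 ≤ d) {x : ℝ}
    (hx1 : -(1 / ((q : ℝ) - 1)) < x) (hx2 : x < 1) : 0 < NF q d x := by
  have hQ := hQ2 hq
  have hQ0 : (0:ℝ) < (q:ℝ) - 1 := by linarith
  have hD : (3:ℝ) ≤ (d:ℝ) := by exact_mod_cast hd
  set Q := (q:ℝ)
  set D := (d:ℝ)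
  rcases le_or_gt 0 x with hx0 | hx0
  · -- 0 ≤ x < 1
    set u := x ^ (d-2) with hu
    have hu0 : 0 ≤ u := pow_nonneg hx0 _
    have hu1 : u ≤ 1 := (pow_lt_one₀ hx0 hx2 (by omega)).le
    have hNF : NF q d x = 1 - u*x^2 + ((D-1)*(u*(1-x^2)) + (Q-2)*D*(u*x*(1-x))
        + (Q-1)*(u*x^2*(1-u))) := by
      rw [NF]; ring
    rw [hNF]
    have h1 : 0 ≤ (D-1)*(u*(1-x^2)) := by
      apply mul_nonneg (by linarith) (mul_nonneg hu0 (by nlinarith))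
    have h2 : 0 ≤ (Q-2)*D*(u*x*(1-x)) := by
      apply mul_nonneg (mul_nonneg (by linarith) (by linarith))
      apply mul_nonneg (mul_nonneg hu0 hx0) (by linarith)
    have h3 : 0 ≤ (Q-1)*(u*x^2*(1-u)) := by
      apply mul_nonneg (by linarith)
      apply mul_nonneg (mul_nonneg hu0 (sq_nonneg x)) (by linarith)
    have h4 : u*x^2 < 1 := by nlinarith
    linarith
  · -- x < 0
    set s : ℝ := -x with hs
    have hs0 : 0 < s := by rw [hs]; linarith
    have hsc : s < 1 / (Q - 1) := by rw [hs]; linarith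
    have hQs : (Q - 1) * s < 1 := by
      rw [lt_div_iff₀ hQ0] at hsc; linarith [hsc]
    have hs1 : s < 1 := by
      have : 1 / (Q-1) ≤ 1 := by rw [div_le_one hQ0]; linarith
      linarith
    set v : ℝ := s ^ (d-2) with hv
    have hv0 : 0 < v := pow_pos hs0 _
    have hv1 : v < 1 := pow_lt_one₀ hs0.le hs1 (by omega)
    have hvs : v ≤ s := by
      calc v = s ^ (d-2) := rfl
        _ ≤ s ^ 1 := pow_le_pow_of_le_one hs0.le hs1.le (by omega)
        _ = s := pow_one s
    have hxs : x = -s := by simp [hs]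
    rcases Nat.even_or_odd d with hev | hod
    · -- d even, d - 2 even
      have hev2 : Even (d - 2) := by
        rcases hev with ⟨k, hk⟩; exact ⟨k - 1, by omega⟩
      have hux : x ^ (d-2) = v := by rw [hxs, hev2.neg_pow]
      have hNF : NF q d x = 1 + (D-1)*v - (Q-2)*D*(v*s) - (Q-1)*(D-1)*(v*s^2)
          - (Q-1)*(v^2*s^2) := by
        rw [NF, hux, hxs]; ring
      rw [hNF]
      rcases eq_or_lt_of_le hq with hq2 | hq3
      · -- q = 2
        have hQ2' : Q = 2 := by simp only [Q, ← hq2]; norm_num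
        rw [hQ2']
        have hs2 : (0:ℝ) ≤ 1 - s^2 := by nlinarith
        have f1 : v*s^2 ≤ v := by nlinarith [mul_nonneg hv0.le hs2]
        have f2 : v^2*s^2 < 1 := by nlinarith [sq_nonneg s, sq_nonneg v, mul_pos hv0 hs0]
        have f3 : 0 ≤ (D-1)*(v - v*s^2) := mul_nonneg (by linarith) (by linarith)
        nlinarith [f2, f3]
      · -- q ≥ 3
        have hQ3 : (3:ℝ) ≤ Q :=
          (by exact_mod_cast (show (3:ℕ) ≤ q by omega) : (3:ℝ) ≤ ((q:ℕ):ℝ))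
        have hDv : (0:ℝ) ≤ D*v := mul_nonneg (by linarith) hv0.le
        have hDv1 : (0:ℝ) ≤ (D-1)*v := mul_nonneg (by linarith) hv0.le
        have t1 : (Q-2)*D*(v*s) ≤ D*(v*(1-s)) := by
          have hA : (Q-2)*s ≤ 1-s := by linarith
          have := mul_le_mul_of_nonneg_left hA hDv
          nlinarith [this]
        have t2 : (Q-1)*(D-1)*(v*s^2) ≤ (D-1)*(v*s) := by
          have hB : (Q-1)*s^2 ≤ s := by nlinarith
          have := mul_le_mul_of_nonneg_left hB hDv1
          nlinarith [this]
        have t3 : (Q-1)*(v^2*s^2) ≤ v := by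
          have hA : (0:ℝ) ≤ v^2*s := mul_nonneg (sq_nonneg v) hs0.le
          have e1 := mul_le_mul_of_nonneg_left hQs.le hA
          have e2 : v^2*s ≤ v := by nlinarith [sq_nonneg v]
          nlinarith [e1, e2]
        have hfin : v*(2-s) < 1 := by
          nlinarith [sq_nonneg (1-s), mul_nonneg (sub_nonneg.2 hvs) (by linarith : (0:ℝ) ≤ 2 - s)]
        have hfin2 : 0 < 1 + (D-1)*v - D*(v*(1-s)) - (D-1)*(v*s) - v := by
          have he : 1 + (D-1)*v - D*(v*(1-s)) - (D-1)*(v*s) - v = 1 - v*(2-s) := by ring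
          rw [he]; linarith
        linarith [t1, t2, t3, hfin2]
    · -- d odd, d - 2 odd
      have hod2 : Odd (d - 2) := by
        rcases hod with ⟨k, hk⟩; exact ⟨k - 1, by omega⟩
      have hux : x ^ (d-2) = -v := by rw [hxs, hod2.neg_pow]
      have hNF : NF q d x = 1 - (D-1)*v + (Q-2)*D*(v*s) + (Q-1)*(D-1)*(v*s^2)
          - (Q-1)*(v^2*s^2) := by
        rw [NF, hux, hxs]; ring
      rw [hNF]
      have t3 : (Q-1)*(v^2*s^2) ≤ (Q-1)*(D-1)*(v*s^2) := by
        have hv2 : v^2 ≤ (D-1)*v := by nlinarith [mul_nonneg hv0.le (show (0:ℝ) ≤ D - 1 - v by linarith)]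
        have h1 : v^2*s^2 ≤ (D-1)*(v*s^2) := by
          nlinarith [mul_le_mul_of_nonneg_right hv2 (sq_nonneg s)]
        calc (Q-1)*(v^2*s^2) ≤ (Q-1)*((D-1)*(v*s^2)) :=
              mul_le_mul_of_nonneg_left h1 (by linarith)
          _ = (Q-1)*(D-1)*(v*s^2) := by ring
      rcases eq_or_lt_of_le hq with hq2 | hq3
      · -- q = 2 : use pair_sum
        have hQ2' : Q = 2 := by simp only [Q, ← hq2]; norm_num
        rw [hQ2']
        set m := d - 2 with hm
        have hm1 : 1 ≤ m := by omega
        have hDm : D - 1 = (m:ℝ) + 1 := by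
          rw [hm]; rw [Nat.cast_sub (by omega)]; push_cast; ring
        have hps := pair_sum m hm1 hs0 hs1
        have hgi := geom_id m s
        have hs2 : (0:ℝ) < 1 - s^2 := by nlinarith
        have hkey : ((m:ℝ)+1) * s^m * (1 - s^2) < 1 - (s^m)^2 * s^2 := by
          calc ((m:ℝ)+1) * s^m * (1 - s^2)
              < (∑ k ∈ Finset.range (m+1), s ^ (2*k)) * (1 - s^2) := by
                apply mul_lt_mul_of_pos_right hps hs2
            _ = 1 - (s^m)^2 * s^2 := hgi
        rw [hDm]
        have hveq : v = s^m := rfl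
        nlinarith [hkey]
      · -- q ≥ 3 : (D-1) v < 1
        have hQ3 : (3:ℝ) ≤ Q :=
          (by exact_mod_cast (show (3:ℕ) ≤ q by omega) : (3:ℝ) ≤ ((q:ℕ):ℝ))
        have hshalf : s < 1/2 := by
          have : 1 / (Q-1) ≤ 1/2 := by
            rw [div_le_div_iff₀ hQ0 (by norm_num)]; linarith
          linarith
        have hcast : D - 1 ≤ (2:ℝ) ^ (d-2) := by
          have hnat : d - 1 ≤ 2 ^ (d - 2) := by
            have := Nat.lt_two_pow_self (n := d-2)
            omega
          have : ((d - 1 : ℕ) : ℝ) ≤ ((2 ^ (d-2) : ℕ) : ℝ) := by exact_mod_cast hnat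
          rw [Nat.cast_sub (by omega)] at this
          push_cast at this
          linarith
        have hkey : (D-1)*v < 1 := by
          have h2s : (2*s) ^ (d-2) < 1 :=
            pow_lt_one₀ (by linarith) (by linarith) (by omega)
          rw [mul_pow] at h2s
          calc (D-1)*v ≤ (2:ℝ)^(d-2) * v := mul_le_mul_of_nonneg_right hcast hv0.le
            _ = 2^(d-2) * s^(d-2) := rfl
            _ < 1 := h2s
        have hpos : 0 ≤ (Q-2)*D*(v*s) := by
          apply mul_nonneg (mul_nonneg (by linarith) (by linarith)) (by positivity)
        linarith [t3, hkey, hpos]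

lemma NF_cont (q d : ℕ) : Continuous (NF q d) := by
  show Continuous fun w : ℝ => 1 + ((d : ℝ) - 1) * w ^ (d - 2) + ((q : ℝ) - 2) * (d : ℝ) * (w ^ (d - 2) * w)
    - ((q : ℝ) - 1) * ((d : ℝ) - 1) * (w ^ (d - 2) * w ^ 2)
    - ((q : ℝ) - 1) * ((w ^ (d - 2)) ^ 2 * w ^ 2)
  fun_prop

lemma denF_cont (q d : ℕ) : Continuous (denF q d) := by
  show Continuous fun w : ℝ => 1 + ((q : ℝ) - 1) * w ^ d
  fun_prop

lemma zetaF_strictMono (q d : ℕ) (hq : 2 ≤ q) (hd : 3 ≤ d) :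
    StrictMonoOn (zetaF q d) (Icc (-(1 / ((q : ℝ) - 1))) 1) := by
  have ha0 := aF_neg hq
  apply strictMonoOn_of_deriv_pos (convex_Icc _ _) (zetaF_contOn q d hq hd)
  intro x hx
  rw [interior_Icc] at hx
  rw [(zetaF_hasDeriv q d hq hd hx).deriv]
  have h1 := NF_pos q d hq hd hx.1 hx.2
  have hxne : x ≠ -1 := by
    have := aF_ge hq
    intro h; rw [h] at hx; linarith [hx.1]
  have h2 := den_pos q d hq hd hx.1.le hx.2.le (fun h => hxne h.2.2)
  positivity

lemma zetaF_sub_sign (q d : ℕ) (hq : 2 ≤ q) (hd : 3 ≤ d) {w : ℝ}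
    (hw1 : -(1 / ((q : ℝ) - 1)) < w) (hw2 : w < 1) :
    (zetaF q d w - w) * denF q d w = w ^ (d-1) * ((1 - w) * (1 + ((q:ℝ) - 1) * w)) := by
  have hwne : w ≠ -1 := by
    have := aF_ge hq
    intro h; rw [h] at hw1; linarith
  have hden := den_pos q d hq hd hw1.le hw2.le (fun h => hwne h.2.2)
  rw [zetaF_eq q d (fun h => hwne h.2.2)]
  have h := num_sub_mul_den q d hd w
  rw [pow_dm1 d hd]
  field_simp
  linarith [h]

lemma inv_cont {g : ℝ → ℝ} {p r a b : ℝ} (hpr : p < r) (hab : a < b)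
    (hmono : StrictMonoOn g (Icc p r)) (himg : Icc a b ⊆ g '' Icc p r)
    (hgp : g p = a) (hgr : g r = b) : ContinuousOn g (Icc p r) := by
  have hmono' : MonotoneOn g (Icc p r) := hmono.monotoneOn
  intro z hz
  rcases eq_or_lt_of_le hz.1 with heq | hz1
  · subst heq
    have h := continuousWithinAt_right_of_monotoneOn_of_image_mem_nhdsWithin hmono'
      (Icc_mem_nhdsGE_of_mem ⟨le_rfl, hpr⟩)
      (by rw [hgp]; exact mem_of_superset (Icc_mem_nhdsGE_of_mem ⟨le_rfl, hab⟩) himg)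
    exact h.mono Icc_subset_Ici_self
  rcases eq_or_lt_of_le hz.2 with heq | hz2
  · subst heq
    have h := continuousWithinAt_left_of_monotoneOn_of_image_mem_nhdsWithin hmono'
      (Icc_mem_nhdsLE_of_mem ⟨hpr, le_rfl⟩)
      (by rw [hgr]; exact mem_of_superset (Icc_mem_nhdsLE_of_mem ⟨hab, le_rfl⟩) himg)
    exact h.mono Icc_subset_Iic_self
  · have hgz1 : a < g z := by rw [← hgp]; exact hmono ⟨le_rfl, hpr.le⟩ hz hz1
    have hgz2 : g z < b := by rw [← hgr]; exact hmono hz ⟨hpr.le, le_rfl⟩ hz2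
    have h := continuousAt_of_monotoneOn_of_image_mem_nhds hmono'
      (Icc_mem_nhds hz1 hz2) (mem_of_superset (Icc_mem_nhds hgz1 hgz2) himg)
    exact h.continuousWithinAt

/-- For `q ≥ 2`, `d ≥ 3`, the equation `ζ_{q,d}(ẑ) = z` has a unique
solution `ẑ₁(z) ∈ [−1/(q−1), 1]` for each `z ∈ [z₁, 1]` and no solution for `z < z₁`;
the solution map is continuous on `[z₁, 1]`, continuously differentiable with strictly
positive derivative on `(z₁, 1)`, and `ẑ₁(z) ∈ I′_{q,d}(z)`. -/
theorem zetaF_inverse_function (q d : ℕ) (hq : 2 ≤ q) (hd : 3 ≤ d) :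
    ∃ zhat : ℝ → ℝ,
      (∀ z ∈ Set.Icc (zOne q d) 1,
        zhat z ∈ Set.Icc (-(1 / ((q : ℝ) - 1))) 1 ∧ zetaF q d (zhat z) = z ∧
        (∀ w ∈ Set.Icc (-(1 / ((q : ℝ) - 1))) 1, zetaF q d w = z → w = zhat z)) ∧
      (∀ z : ℝ, z < zOne q d →
        ¬∃ w ∈ Set.Icc (-(1 / ((q : ℝ) - 1))) 1, zetaF q d w = z) ∧
      ContinuousOn zhat (Set.Icc (zOne q d) 1) ∧
      (∃ g : ℝ → ℝ, ContinuousOn g (Set.Ioo (zOne q d) 1) ∧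
        ∀ z ∈ Set.Ioo (zOne q d) 1, HasDerivAt zhat (g z) z ∧ 0 < g z) ∧
      (∀ z ∈ Set.Icc (zOne q d) 1, zhat z ∈ Iprime q d z) := by
  classical
  have hQ := hQ2 hq
  have hQ0 : (0:ℝ) < (q:ℝ) - 1 := by linarith
  set a : ℝ := -(1 / ((q : ℝ) - 1)) with ha_def
  have ha0 : a < 0 := aF_neg hq
  have ha1 : a < 1 := by linarith
  have ham1 : (-1:ℝ) ≤ a := aF_ge hq
  set f := zetaF q d with hf_def
  set K := Icc a 1 with hK_def
  have hmono : StrictMonoOn f K := zetaF_strictMono q d hq hd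
  have hmono' : MonotoneOn f K := hmono.monotoneOn
  have hcont : ContinuousOn f K := zetaF_contOn q d hq hd
  have hfa : f a = zOne q d := zetaF_aF q d hq hd
  have hf1 : f 1 = 1 := zetaF_one q d hq hd
  have hf0 : f 0 = 0 := zetaF_zero q d hq hd
  have hzone0 : zOne q d < 0 := zOne_neg hq hd
  have hzone1 : zOne q d < 1 := by linarith
  have haK : a ∈ K := ⟨le_rfl, ha1.le⟩
  have h1K : (1:ℝ) ∈ K := ⟨ha1.le, le_rfl⟩
  have h0K : (0:ℝ) ∈ K := ⟨ha0.le, by norm_num⟩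
  have hmaps : ∀ w ∈ K, f w ∈ Icc (zOne q d) 1 := by
    intro w hw
    constructor
    · rw [← hfa]; exact hmono' haK hw hw.1
    · rw [← hf1]; exact hmono' hw h1K hw.2
  have hsurj : ∀ z ∈ Icc (zOne q d) 1, ∃ w ∈ K, f w = z := by
    intro z hz
    have h := intermediate_value_Icc ha1.le hcont
    rw [hfa, hf1] at h
    obtain ⟨w, hwK, hfw⟩ := h hz
    exact ⟨w, hwK, hfw⟩
  set zhat : ℝ → ℝ := fun z => if h : ∃ w ∈ K, f w = z then h.choose else 0 with hzhat_def
  have hspec : ∀ z ∈ Icc (zOne q d) 1, zhat z ∈ K ∧ f (zhat z) = z := by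
    intro z hz
    have h : ∃ w ∈ K, f w = z := hsurj z hz
    simp only [hzhat_def, dif_pos h]
    exact ⟨h.choose_spec.1, h.choose_spec.2⟩
  have huniq : ∀ z ∈ Icc (zOne q d) 1, ∀ w ∈ K, f w = z → w = zhat z := by
    intro z hz w hw hfw
    obtain ⟨hzK, hzf⟩ := hspec z hz
    exact hmono.injOn hw hzK (by rw [hfw, hzf])
  have hfix : ∀ w ∈ K, zhat (f w) = w := by
    intro w hw
    exact (huniq (f w) (hmaps w hw) w hw rfl).symm
  have hz_mono : ∀ z₁ ∈ Icc (zOne q d) 1, ∀ z₂ ∈ Icc (zOne q d) 1, z₁ < z₂ →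
      zhat z₁ < zhat z₂ := by
    intro z₁ hz₁ z₂ hz₂ hlt
    have h₁ := hspec z₁ hz₁
    have h₂ := hspec z₂ hz₂
    apply (hmono.lt_iff_lt h₁.1 h₂.1).mp
    rw [h₁.2, h₂.2]; exact hlt
  have hgp : zhat (zOne q d) = a := (huniq _ ⟨le_rfl, hzone1.le⟩ a haK hfa).symm
  have hgr : zhat 1 = 1 := (huniq _ ⟨hzone1.le, le_rfl⟩ 1 h1K hf1).symm
  have hg0 : zhat 0 = 0 := (huniq _ ⟨hzone0.le, by norm_num⟩ 0 h0K hf0).symm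
  have hmono_zhat : StrictMonoOn zhat (Icc (zOne q d) 1) := by
    intro z₁ hz₁ z₂ hz₂ hlt
    exact hz_mono z₁ hz₁ z₂ hz₂ hlt
  have himg : Icc a 1 ⊆ zhat '' Icc (zOne q d) 1 := by
    intro w hw
    exact ⟨f w, hmaps w hw, hfix w hw⟩
  have hcont_zhat : ContinuousOn zhat (Icc (zOne q d) 1) :=
    inv_cont hzone1 ha1 hmono_zhat himg hgp hgr
  -- location of zhat z for z in the open interval
  have hloc : ∀ z ∈ Ioo (zOne q d) 1, zhat z ∈ Ioo a 1 := by
    intro z hz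
    constructor
    · rw [← hgp]; exact hz_mono _ ⟨le_rfl, hzone1.le⟩ _ ⟨hz.1.le, hz.2.le⟩ hz.1
    · rw [← hgr]; exact hz_mono _ ⟨hz.1.le, hz.2.le⟩ _ ⟨hzone1.le, le_rfl⟩ hz.2
  refine ⟨zhat, ?_, ?_, hcont_zhat, ?_, ?_⟩
  · intro z hz
    exact ⟨(hspec z hz).1, (hspec z hz).2, fun w hw hfw => huniq z hz w hw hfw⟩
  · intro z hzlt ⟨w, hwK, hfw⟩
    have h5 : zOne q d ≤ f w := by rw [← hfa]; exact hmono' haK hwK hwK.1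
    have h6 : f w = z := hfw
    linarith
  · -- differentiability
    refine ⟨fun z => (NF q d (zhat z) / (denF q d (zhat z)) ^ 2)⁻¹, ?_, ?_⟩
    · -- continuity of g
      have hcz : ContinuousOn zhat (Ioo (zOne q d) 1) := hcont_zhat.mono Ioo_subset_Icc_self
      have h1 : ContinuousOn (fun z => NF q d (zhat z)) (Ioo (zOne q d) 1) :=
        (NF_cont q d).comp_continuousOn hcz
      have h2 : ContinuousOn (fun z => (denF q d (zhat z)) ^ 2) (Ioo (zOne q d) 1) :=
        ((denF_cont q d).pow 2).comp_continuousOn hcz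
      have hne : ∀ z ∈ Ioo (zOne q d) 1, (denF q d (zhat z)) ^ 2 ≠ 0 := by
        intro z hz
        have hx := hloc z hz
        have hxne : zhat z ≠ -1 := by intro h; rw [h] at hx; linarith [hx.1]
        have := den_pos q d hq hd hx.1.le hx.2.le (fun h => hxne h.2.2)
        positivity
      have hdiv : ContinuousOn (fun z => NF q d (zhat z) / (denF q d (zhat z)) ^ 2)
          (Ioo (zOne q d) 1) := h1.div h2 hne
      apply hdiv.inv₀
      intro z hz
      have hx := hloc z hz
      have hxne : zhat z ≠ -1 := by intro h; rw [h] at hx; linarith [hx.1]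
      have hdp := den_pos q d hq hd hx.1.le hx.2.le (fun h => hxne h.2.2)
      have hnp := NF_pos q d hq hd hx.1 hx.2
      positivity
    · intro z hz
      have hx := hloc z hz
      have hxne : zhat z ≠ -1 := by intro h; rw [h] at hx; linarith [hx.1]
      have hdp := den_pos q d hq hd hx.1.le hx.2.le (fun h => hxne h.2.2)
      have hnp := NF_pos q d hq hd hx.1 hx.2
      have hderiv : HasDerivAt f (NF q d (zhat z) / (denF q d (zhat z)) ^ 2) (zhat z) :=
        zetaF_hasDeriv q d hq hd hx
      have hca : ContinuousAt zhat z :=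
        hcont_zhat.continuousAt (Icc_mem_nhds hz.1 hz.2)
      have hev : ∀ᶠ y in nhds z, f (zhat y) = y := by
        filter_upwards [isOpen_Ioo.mem_nhds hz] with y hy
        exact (hspec y (Ioo_subset_Icc_self hy)).2
      refine ⟨hderiv.of_local_left_inverse hca ?_ hev, ?_⟩
      · positivity
      · have h : (0:ℝ) < NF q d (zhat z) / (denF q d (zhat z)) ^ 2 := by positivity
        exact inv_pos.mpr h
  · -- localization
    intro z hz
    by_cases h1 : z = zOne q d
    · subst h1
      rw [Iprime, if_pos rfl]
      rw [mem_singleton_iff, hgp, ha_def]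
    by_cases h2 : z = 0
    · subst h2
      rw [Iprime, if_neg h1, if_pos rfl]
      simpa using hg0
    by_cases h3 : z = 1
    · subst h3
      rw [Iprime, if_neg h1, if_neg h2, if_pos rfl]
      simpa using hgr
    -- now zOne < z < 1, z ≠ 0
    have hzo : zOne q d < z := lt_of_le_of_ne hz.1 (Ne.symm h1)
    have hz1 : z < 1 := lt_of_le_of_ne hz.2 h3
    have hx := hloc z ⟨hzo, hz1⟩
    set x := zhat z with hx_def
    have hfx : f x = z := (hspec z hz).2
    have hxne : x ≠ -1 := by intro h; rw [h] at hx; linarith [hx.1]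
    have hdp := den_pos q d hq hd hx.1.le hx.2.le (fun h => hxne h.2.2)
    have hsign := zetaF_sub_sign q d hq hd hx.1 hx.2
    have hfx2 : zetaF q d x = z := hfx
    rw [hfx2] at hsign
    have hB : 0 < 1 + ((q:ℝ) - 1) * x := by
      have h := mul_lt_mul_of_pos_left hx.1 hQ0
      have : ((q:ℝ) - 1) * a = -1 := by
        rw [ha_def]; field_simp
      nlinarith [h]
    have hC : 0 < 1 - x := by linarith [hx.2]
    rcases lt_or_gt_of_ne h2 with hzneg | hzpos
    · -- z < 0
      have hx0 : x < 0 := by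
        rw [← hg0]
        exact hz_mono z hz 0 ⟨hzone0.le, by norm_num⟩ hzneg
      rcases Nat.even_or_odd d with hev | hod
      · -- d even : d - 1 odd, x^(d-1) < 0, z < x < 0
        have hod1 : Odd (d-1) := by
          rcases hev with ⟨k, hk⟩; exact ⟨k - 1, by omega⟩
        have hxp : x ^ (d-1) < 0 := hod1.pow_neg hx0
        have hzx : z < x := by nlinarith [hsign, mul_pos hC hB]
        rw [Iprime, if_neg h1, if_neg h2, if_neg h3, if_pos hzneg,
          if_neg (by simpa using hev : ¬ Odd d)]
        exact ⟨hzx, hx0⟩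
      · -- d odd : d - 1 even, x^(d-1) > 0, a < x < z
        have hev1 : Even (d-1) := by
          rcases hod with ⟨k, hk⟩; exact ⟨k, by omega⟩
        have hxp : 0 < x ^ (d-1) := hev1.pow_pos (ne_of_lt hx0)
        have hxz : x < z := by nlinarith [hsign, mul_pos hC hB]
        rw [Iprime, if_neg h1, if_neg h2, if_neg h3, if_pos hzneg, if_pos hod]
        exact ⟨hx.1, hxz⟩
    · -- z > 0
      have hx0 : 0 < x := by
        rw [← hg0]
        exact hz_mono 0 ⟨hzone0.le, by norm_num⟩ z hz hzpos
      have hxp : 0 < x ^ (d-1) := pow_pos hx0 _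
      have hxz : x < z := by nlinarith [hsign, mul_pos hC hB]
      rw [Iprime, if_neg h1, if_neg h2, if_neg h3, if_neg (by linarith : ¬ z < 0)]
      exact ⟨hx0, hxz⟩
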